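/- Let K be a field, a, b ∈ K, and f = Y²Z − X³ − aXZ² − bZ³ ∈ K[X,Y,Z]. The only linear forms (up to scalar) dividing Z(Y + μZ) for μ ∈ K are Z and Y + μZ, both of which divide Z(Y² − μ²Z²), and neither of which divides f. In particular, the vector (Z(Y + μZ), −X² − λXZ − (a + λ²)Z²) does not lie in (X,Y,Z)·L where L = ker((Y − μZ, X − λZ): A(−1)² → A) and A = K[X,Y,Z]/(f), provided μ² = λ³ + aλ + b. -/

import Mathlib

open MvPolynomial

section Aux

variable {K : Type*} [Field K]

theorem stmt18_prime_X (i : Fin 3) : Prime (X i : MvPolynomial (Fin 3) K) := by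
  have h0 : Prime (X 0 : MvPolynomial (Fin 3) K) := by
    rw [(MulEquiv.prime_iff (MvPolynomial.finSuccEquiv K 2).toRingEquiv.toMulEquiv
      (p := (X 0 : MvPolynomial (Fin 3) K))).symm]
    have : (MvPolynomial.finSuccEquiv K 2) (X 0) = Polynomial.X := finSuccEquiv_X_zero
    rw [show (MvPolynomial.finSuccEquiv K 2).toRingEquiv.toMulEquiv (X 0) = Polynomial.X from this]
    exact Polynomial.prime_X
  have h := (MulEquiv.prime_iff (MvPolynomial.renameEquiv K (Equiv.swap (0 : Fin 3) i)).toRingEquiv.toMulEquiv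
      (p := (X 0 : MvPolynomial (Fin 3) K))).symm
  rw [h] at h0
  simpa [renameEquiv_apply, rename_X] using h0

noncomputable def stmt18_shearHom (t : K) : MvPolynomial (Fin 3) K →ₐ[K] MvPolynomial (Fin 3) K :=
  aeval ![X 0, X 1 + C t * X 2, X 2]

theorem stmt18_shear_comp (t : K) :
    (stmt18_shearHom t).comp (stmt18_shearHom (-t)) = AlgHom.id K _ := by
  apply MvPolynomial.algHom_ext
  intro i
  fin_cases i <;>
    simp [stmt18_shearHom, aeval_X, map_add, map_mul, algebraMap_eq]

noncomputable def stmt18_shearEquiv (t : K) :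
    MvPolynomial (Fin 3) K ≃ₐ[K] MvPolynomial (Fin 3) K :=
  AlgEquiv.ofAlgHom (stmt18_shearHom t) (stmt18_shearHom (-t)) (stmt18_shear_comp t) (by
    have := stmt18_shear_comp (-t); rwa [neg_neg] at this)

theorem stmt18_prime_lin (t : K) : Prime (X 1 + C t * X 2 : MvPolynomial (Fin 3) K) := by
  have h := (MulEquiv.prime_iff (stmt18_shearEquiv t).toRingEquiv.toMulEquiv
    (p := (X 1 : MvPolynomial (Fin 3) K))).symm
  have he : (stmt18_shearEquiv t).toRingEquiv.toMulEquiv (X 1) = X 1 + C t * X 2 := by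
    simp [stmt18_shearEquiv, stmt18_shearHom]
  rw [he] at h
  exact h.mp (stmt18_prime_X 1)

theorem stmt18_sum_hc {N : ℕ} (p : MvPolynomial (Fin 3) K) (h : p.totalDegree < N) :
    ∑ i ∈ Finset.range N, homogeneousComponent i p = p := by
  conv_rhs => rw [← sum_homogeneousComponent p]
  have hsub : Finset.range (p.totalDegree + 1) ⊆ Finset.range N :=
    Finset.range_subset_range.mpr (by omega)
  refine (Finset.sum_subset hsub ?_).symm
  intro i _ hi
  exact homogeneousComponent_eq_zero _ p (by simp only [Finset.mem_range] at hi; omega)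

theorem stmt18_hc_mul {m : ℕ} (k : ℕ) {p : MvPolynomial (Fin 3) K} (q : MvPolynomial (Fin 3) K)
    (hp : p.IsHomogeneous m) :
    homogeneousComponent (m + k) (p * q) = p * homogeneousComponent k q := by
  conv_lhs => rw [← sum_homogeneousComponent q, Finset.mul_sum, map_sum]
  have step : ∀ j, homogeneousComponent (m + k) (p * homogeneousComponent j q)
      = if j = k then p * homogeneousComponent j q else 0 := by
    intro j
    rw [homogeneousComponent_of_mem (n := m + j) ((mem_homogeneousSubmodule _ _).mpr
      (hp.mul (homogeneousComponent_isHomogeneous j q)))]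
    by_cases h : j = k
    · subst h; simp
    · rw [if_neg (by omega), if_neg h]
  rw [Finset.sum_congr rfl fun j _ => step j, Finset.sum_ite_eq' _ k]
  split_ifs with h
  · rfl
  · rw [homogeneousComponent_eq_zero, mul_zero]
    simp only [Finset.mem_range] at h; omega

theorem stmt18_hc_mul_lt {m n : ℕ} (h : n < m) {p : MvPolynomial (Fin 3) K}
    (q : MvPolynomial (Fin 3) K) (hp : p.IsHomogeneous m) :
    homogeneousComponent n (p * q) = 0 := by
  conv_lhs => rw [← sum_homogeneousComponent q, Finset.mul_sum, map_sum]
  apply Finset.sum_eq_zero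
  intro j _
  rw [homogeneousComponent_of_mem (n := m + j) ((mem_homogeneousSubmodule _ _).mpr
    (hp.mul (homogeneousComponent_isHomogeneous j q))), if_neg (by omega)]

theorem stmt18_hc_self {n : ℕ} {p : MvPolynomial (Fin 3) K} (hp : p.IsHomogeneous n) :
    homogeneousComponent n p = p := by
  rw [homogeneousComponent_of_mem ((mem_homogeneousSubmodule _ _).mpr hp), if_pos rfl]

theorem stmt18_hc2_mul (R P : MvPolynomial (Fin 3) K) (hR : homogeneousComponent 0 R = 0)
    (hP : homogeneousComponent 0 P = 0) :
    homogeneousComponent 2 (R * P) = homogeneousComponent 1 R * homogeneousComponent 1 P := by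
  conv_lhs => rw [← stmt18_sum_hc R (N := R.totalDegree + 3) (by omega), Finset.sum_mul, map_sum]
  have step : ∀ i, homogeneousComponent 2 (homogeneousComponent i R * P)
      = if i = 1 then homogeneousComponent 1 R * homogeneousComponent 1 P else 0 := by
    intro i
    match i with
    | 0 => rw [hR]; simp
    | 1 =>
      rw [if_pos rfl]
      have := stmt18_hc_mul (m := 1) 1 P (homogeneousComponent_isHomogeneous 1 R)
      simpa using this
    | 2 =>
      rw [if_neg (by omega)]
      have := stmt18_hc_mul (m := 2) 0 P (homogeneousComponent_isHomogeneous 2 R)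
      simp only [Nat.add_zero] at this
      rw [this, hP, mul_zero]
    | (n+3) =>
      rw [if_neg (by omega)]
      exact stmt18_hc_mul_lt (by omega) P (homogeneousComponent_isHomogeneous (n+3) R)
  rw [Finset.sum_congr rfl fun i _ => step i, Finset.sum_ite_eq' _ 1, if_pos (by simp)]

theorem stmt18_assoc {w l : MvPolynomial (Fin 3) K} (s : MvPolynomial (Fin 3) K)
    (hw : w.IsHomogeneous 1) (hl : l.IsHomogeneous 1) (hl0 : l ≠ 0) (h : l = w * s) :
    ∃ c : K, c ≠ 0 ∧ l = C c * w := by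
  have key : l = w * C (coeff 0 s) := by
    conv_lhs => rw [← stmt18_hc_self hl, h]
    have := stmt18_hc_mul (m := 1) 0 s hw
    rw [Nat.add_zero] at this
    rw [this, homogeneousComponent_zero]
  refine ⟨coeff 0 s, ?_, by rw [key, mul_comm]⟩
  intro hc
  rw [hc, map_zero, mul_zero] at key
  exact hl0 key

theorem stmt18_classify (mu : K) (l : MvPolynomial (Fin 3) K) (hl0 : l ≠ 0)
    (hl : l.IsHomogeneous 1) (hdvd : l ∣ X 2 * (X 1 + C mu * X 2)) :
    ∃ c : K, c ≠ 0 ∧ (l = C c * X 2 ∨ l = C c * (X 1 + C mu * X 2)) := by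
  have hWhom : (X 1 + C mu * X 2 : MvPolynomial (Fin 3) K).IsHomogeneous 1 :=
    (isHomogeneous_X _ _).add (isHomogeneous_C_mul_X mu 2)
  obtain ⟨q, hq⟩ := hdvd
  by_cases hZl : (X 2 : MvPolynomial (Fin 3) K) ∣ l
  · obtain ⟨s, hs⟩ := hZl
    obtain ⟨c, hc, hcl⟩ := stmt18_assoc s (isHomogeneous_X _ _) hl hl0 hs
    exact ⟨c, hc, Or.inl hcl⟩
  · have hZ := stmt18_prime_X (K := K) 2
    rcases hZ.2.2 l q (hq ▸ dvd_mul_right (X 2) (X 1 + C mu * X 2)) with h | h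
    · exact absurd h hZl
    · obtain ⟨q₁, hq₁⟩ := h
      have hW : X 1 + C mu * X 2 = l * q₁ := by
        apply mul_left_cancel₀ hZ.ne_zero
        rw [hq, hq₁]; ring
      rcases (stmt18_prime_lin mu).irreducible.isUnit_or_isUnit hW with hu | hu
      · exfalso
        obtain ⟨v, hv⟩ := isUnit_iff_exists_inv.mp hu
        have := congrArg constantCoeff hv
        rw [map_mul, map_one] at this
        have h0 : constantCoeff l = 0 := by
          rw [constantCoeff_eq]
          exact hl.coeff_eq_zero (by simp [Finsupp.degree])
        rw [h0, zero_mul] at this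
        exact zero_ne_one this
      · obtain ⟨v, hv⟩ := isUnit_iff_exists_inv.mp hu
        have hlW : l = (X 1 + C mu * X 2) * v := by
          calc l = l * (q₁ * v) := by rw [hv, mul_one]
          _ = (l * q₁) * v := by ring
          _ = (X 1 + C mu * X 2) * v := by rw [← hW]
        obtain ⟨c, hc, hcl⟩ := stmt18_assoc v hWhom hl hl0 hlW
        exact ⟨c, hc, Or.inr hcl⟩

end Aux

set_option maxHeartbeats 4000000 in
set_option synthInstance.maxHeartbeats 1000000 in
theorem stmt_18 (K : Type*) [Field K] (a b lam mu : K)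
    (hpt : mu ^ 2 = lam ^ 3 + a * lam + b) :
    letI X : MvPolynomial (Fin 3) K := MvPolynomial.X 0
    letI Y : MvPolynomial (Fin 3) K := MvPolynomial.X 1
    letI Z : MvPolynomial (Fin 3) K := MvPolynomial.X 2
    letI f : MvPolynomial (Fin 3) K := Y ^ 2 * Z - X ^ 3 - C a * X * Z ^ 2 - C b * Z ^ 3
    letI P : MvPolynomial (Fin 3) K := -X ^ 2 - C lam * X * Z - C (a + lam ^ 2) * Z ^ 2
    letI A := MvPolynomial (Fin 3) K ⧸ Ideal.span {f}
    letI π : MvPolynomial (Fin 3) K →+* A := Ideal.Quotient.mk (Ideal.span {f})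
    letI L : Submodule A (Fin 2 → A) :=
      LinearMap.ker (!![π (Y - C mu * Z), π (X - C lam * Z)] :
        Matrix (Fin 1) (Fin 2) A).mulVecLin
    (∀ l : MvPolynomial (Fin 3) K, l ≠ 0 → l.IsHomogeneous 1 →
        l ∣ Z * (Y + C mu * Z) →
        ∃ c : K, c ≠ 0 ∧ (l = C c * Z ∨ l = C c * (Y + C mu * Z))) ∧
    Z ∣ Z * (Y ^ 2 - C (mu ^ 2) * Z ^ 2) ∧
    (Y + C mu * Z) ∣ Z * (Y ^ 2 - C (mu ^ 2) * Z ^ 2) ∧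
    ¬ Z ∣ f ∧ ¬ (Y + C mu * Z) ∣ f ∧
    ![π (Z * (Y + C mu * Z)), π P] ∉
      (Ideal.span {π X, π Y, π Z} : Ideal A) • L := by
  refine ⟨fun l hl0 hl hdvd => stmt18_classify mu l hl0 hl hdvd, dvd_mul_right _ _, ?_, ?_, ?_, ?_⟩
  · refine ⟨X 2 * (X 1 - C mu * X 2), ?_⟩
    rw [map_pow]; ring
  · rintro ⟨g, hg⟩
    have := congrArg (eval ![1, 0, 0]) hg
    simp at this
  · rintro ⟨g, hg⟩
    have := congrArg (eval ![1, 0, 0]) hg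
    simp at this
  · intro hmem
    set f₀ : MvPolynomial (Fin 3) K :=
      X 1 ^ 2 * X 2 - X 0 ^ 3 - C a * X 0 * X 2 ^ 2 - C b * X 2 ^ 3 with hf₀def
    have hY : (X 1 - C mu * X 2 : MvPolynomial (Fin 3) K).IsHomogeneous 1 :=
      (isHomogeneous_X _ _).sub (isHomogeneous_C_mul_X mu 2)
    have hXl : (X 0 - C lam * X 2 : MvPolynomial (Fin 3) K).IsHomogeneous 1 :=
      (isHomogeneous_X _ _).sub (isHomogeneous_C_mul_X lam 2)
    have hWhom : (X 1 + C mu * X 2 : MvPolynomial (Fin 3) K).IsHomogeneous 1 :=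
      (isHomogeneous_X _ _).add (isHomogeneous_C_mul_X mu 2)
    have hfh : f₀.IsHomogeneous 3 := by
      rw [hf₀def]
      refine IsHomogeneous.sub (IsHomogeneous.sub (IsHomogeneous.sub ?_ ?_) ?_) ?_
      · exact (isHomogeneous_X_pow 1 2).mul (isHomogeneous_X _ _)
      · exact isHomogeneous_X_pow 0 3
      · exact ((isHomogeneous_C _ a).mul (isHomogeneous_X _ _)).mul (isHomogeneous_X_pow 2 2)
      · exact isHomogeneous_C_mul_X_pow b 2 3
    set π' : MvPolynomial (Fin 3) K →+* (MvPolynomial (Fin 3) K ⧸ Ideal.span {f₀}) :=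
      Ideal.Quotient.mk (Ideal.span {f₀}) with hπ'def
    have hYprime : Prime (X 1 - C mu * X 2 : MvPolynomial (Fin 3) K) := by
      have := stmt18_prime_lin (K := K) (-mu)
      rwa [map_neg, neg_mul, ← sub_eq_add_neg] at this
    -- the key property of elements of I • L
    have main : ∀ w : Fin 2 → (MvPolynomial (Fin 3) K ⧸ Ideal.span {f₀}),
        w ∈ (Ideal.span {π' (X 0), π' (X 1), π' (X 2)}) •
          (LinearMap.ker (!![π' (X 1 - C mu * X 2), π' (X 0 - C lam * X 2)] :
            Matrix (Fin 1) (Fin 2) _).mulVecLin) →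
        ∃ h p q : MvPolynomial (Fin 3) K, h.IsHomogeneous 1 ∧ π' p = w 0 ∧ π' q = w 1 ∧
          homogeneousComponent 2 p = h * (X 0 - C lam * X 2) ∧
          homogeneousComponent 2 q = -(h * (X 1 - C mu * X 2)) := by
      intro w hw
      refine Submodule.smul_induction_on hw ?_ ?_
      · rintro r hr n hn
        have hr' : r ∈ Ideal.map π' (Ideal.span {X 0, X 1, X 2}) := by
          rwa [Ideal.map_span, Set.image_insert_eq, Set.image_insert_eq, Set.image_singleton]
        obtain ⟨R, hRJ, hRr⟩ :=
          (Ideal.mem_map_iff_of_surjective π' Ideal.Quotient.mk_surjective).mp hr'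
        have hR0 : homogeneousComponent 0 R = 0 := by
          rw [homogeneousComponent_zero]
          have hker : Ideal.span {(X 0 : MvPolynomial (Fin 3) K), X 1, X 2} ≤
              RingHom.ker constantCoeff := by
            rw [Ideal.span_le]
            rintro x hx
            simp only [Set.mem_insert_iff, Set.mem_singleton_iff] at hx
            rcases hx with rfl | rfl | rfl <;> simp [RingHom.mem_ker]
          have h0 := hker hRJ
          rw [RingHom.mem_ker, constantCoeff_eq] at h0
          rw [h0, map_zero]
        obtain ⟨P₁, hP₁⟩ := Ideal.Quotient.mk_surjective (n 0)
        obtain ⟨P₂, hP₂⟩ := Ideal.Quotient.mk_surjective (n 1)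
        have heq : π' (X 1 - C mu * X 2) * n 0 + π' (X 0 - C lam * X 2) * n 1 = 0 := by
          have h0 := congr_fun (LinearMap.mem_ker.mp hn) 0
          simpa [Matrix.mulVecLin, Matrix.mulVec, dotProduct, Fin.sum_univ_two] using h0
        have hfd : f₀ ∣ ((X 1 - C mu * X 2) * P₁ + (X 0 - C lam * X 2) * P₂) := by
          rw [← Ideal.mem_span_singleton]
          rw [← Ideal.Quotient.eq_zero_iff_mem]
          rw [map_add, map_mul, map_mul]
          rw [show Ideal.Quotient.mk (Ideal.span {f₀}) P₁ = π' P₁ from rfl]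
          rw [show Ideal.Quotient.mk (Ideal.span {f₀}) P₂ = π' P₂ from rfl]
          rw [hP₁, hP₂]
          exact heq
        obtain ⟨g, hg⟩ := hfd
        have a1 := stmt18_hc_mul (m := 1) 0 P₁ hY
        have a2 := stmt18_hc_mul (m := 1) 0 P₂ hXl
        rw [Nat.add_zero] at a1 a2
        have e1 : ((X 1 : MvPolynomial (Fin 3) K) - C mu * X 2) * C (coeff 0 P₁)
            + (X 0 - C lam * X 2) * C (coeff 0 P₂) = 0 := by
          have hcg := congrArg (homogeneousComponent 1) hg
          rw [map_add, a1, a2, stmt18_hc_mul_lt (by omega) g hfh,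
            homogeneousComponent_zero, homogeneousComponent_zero] at hcg
          exact hcg
        have hc1v : coeff 0 P₁ = 0 := by
          have := congrArg (eval (![lam, 1 + mu, 1] : Fin 3 → K)) e1
          simp [eval_X, eval_C] at this
          linear_combination this
        have hc2v : coeff 0 P₂ = 0 := by
          have := congrArg (eval (![1 + lam, mu, 1] : Fin 3 → K)) e1
          simp [eval_X, eval_C] at this
          linear_combination this
        have hc₁ : homogeneousComponent 0 P₁ = 0 := by
          rw [homogeneousComponent_zero, hc1v, map_zero]
        have hc₂ : homogeneousComponent 0 P₂ = 0 := by
          rw [homogeneousComponent_zero, hc2v, map_zero]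
        have b1 := stmt18_hc_mul (m := 1) 1 P₁ hY
        have b2 := stmt18_hc_mul (m := 1) 1 P₂ hXl
        norm_num at b1 b2
        have e2 : (X 1 - C mu * X 2) * homogeneousComponent 1 P₁
            + (X 0 - C lam * X 2) * homogeneousComponent 1 P₂ = 0 := by
          have hcg := congrArg (homogeneousComponent 2) hg
          rw [map_add, b1, b2, stmt18_hc_mul_lt (by omega) g hfh] at hcg
          exact hcg
        have hdvd_v : (X 1 - C mu * X 2 : MvPolynomial (Fin 3) K) ∣
            (X 0 - C lam * X 2) * homogeneousComponent 1 P₂ := by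
          refine ⟨-homogeneousComponent 1 P₁, ?_⟩
          linear_combination e2
        rcases hYprime.2.2 _ _ hdvd_v with hcase | hcase
        · exfalso
          obtain ⟨t, ht⟩ := hcase
          have := congrArg (eval (![1 + lam, mu, 1] : Fin 3 → K)) ht
          simp at this
        · obtain ⟨s, hs⟩ := hcase
          have hv' : homogeneousComponent 1 P₂ = (X 1 - C mu * X 2) * C (coeff 0 s) := by
            conv_lhs => rw [← stmt18_hc_self (homogeneousComponent_isHomogeneous 1 P₂), hs]
            have := stmt18_hc_mul (m := 1) 0 s hY
            rw [Nat.add_zero] at this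
            rw [this, homogeneousComponent_zero]
          have hu' : homogeneousComponent 1 P₁
              = -((X 0 - C lam * X 2) * C (coeff 0 s)) := by
            apply mul_left_cancel₀ hYprime.ne_zero
            linear_combination e2 - (X 0 - C lam * X 2) * hv'
          refine ⟨C (-(coeff 0 s)) * homogeneousComponent 1 R, R * P₁, R * P₂,
            (homogeneousComponent_isHomogeneous 1 R).C_mul _, ?_, ?_, ?_, ?_⟩
          · rw [map_mul, hRr]
            rw [show Ideal.Quotient.mk (Ideal.span {f₀}) P₁ = π' P₁ from rfl, hP₁]
            simp [Pi.smul_apply, smul_eq_mul]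
          · rw [map_mul, hRr]
            rw [show Ideal.Quotient.mk (Ideal.span {f₀}) P₂ = π' P₂ from rfl, hP₂]
            simp [Pi.smul_apply, smul_eq_mul]
          · rw [stmt18_hc2_mul R P₁ hR0 hc₁, hu', map_neg]
            ring
          · rw [stmt18_hc2_mul R P₂ hR0 hc₂, hv', map_neg]
            ring
      · rintro x y ⟨h₁, p₁, q₁, hh₁, hp₁, hq₁, hcp₁, hcq₁⟩ ⟨h₂, p₂, q₂, hh₂, hp₂, hq₂, hcp₂, hcq₂⟩
        refine ⟨h₁ + h₂, p₁ + p₂, q₁ + q₂, hh₁.add hh₂, ?_, ?_, ?_, ?_⟩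
        · rw [map_add, hp₁, hp₂]; simp
        · rw [map_add, hq₁, hq₂]; simp
        · rw [map_add, hcp₁, hcp₂]; ring
        · rw [map_add, hcq₁, hcq₂]; ring
    obtain ⟨h, p, q, hhom, hp, hq, hcp, hcq⟩ := main _ hmem
    have hp' : π' p = π' (X 2 * (X 1 + C mu * X 2)) := by
      rw [hp]; simp
    have hdiff : f₀ ∣ (p - X 2 * (X 1 + C mu * X 2)) := by
      rw [← Ideal.mem_span_singleton]
      exact Ideal.Quotient.eq.mp hp'
    obtain ⟨g, hg⟩ := hdiff
    have hp2 : homogeneousComponent 2 p = X 2 * (X 1 + C mu * X 2) := by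
      have hcomp : p = f₀ * g + X 2 * (X 1 + C mu * X 2) := eq_add_of_sub_eq hg
      rw [hcomp, map_add, stmt18_hc_mul_lt (by omega) g hfh, zero_add]
      have h1 := stmt18_hc_mul (m := 1) 1 (X 1 + C mu * X 2)
        (isHomogeneous_X (R := K) 2)
      rw [stmt18_hc_self hWhom] at h1
      exact h1
    rw [hp2] at hcp
    have := congrArg (aeval (![Polynomial.C lam, Polynomial.X, 1] : Fin 3 → Polynomial K)) hcp
    simp [map_mul, map_add, map_sub, aeval_X] at this
    exact Polynomial.X_add_C_ne_zero mu this
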